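/- If a graphic sequence d = (d_1, ..., d_n), listed in nonincreasing order, satisfies the k-th Erdős–Gallai inequality with equality (i.e., Σ_{i≤k} d_i = k(k−1) + Σ_{i>k} min{k, d_i}), then k ≤ m(d), where m(d) = max{ i : d_i ≥ i−1 }. -/

import Mathlib

open SimpleGraph Finset

/-- `s` is an independent set in `G`. -/
def IsIndepSet {α : Type*} (G : SimpleGraph α) (s : Set α) : Prop :=
  s.Pairwise fun a b => ¬ G.Adj a b

/-- `(G, A, B)` is a splitted graph: `A` an independent set and `B` a clique
partitioning the vertex set of `G`. -/
def IsSplitted {α : Type*} (G : SimpleGraph α) (A B : Set α) : Prop :=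
  _root_.IsIndepSet G A ∧ G.IsClique B ∧ A ∪ B = Set.univ ∧ Disjoint A B

/-- `G` is a split graph. -/
def IsSplitGraph {α : Type*} (G : SimpleGraph α) : Prop :=
  ∃ A B : Set α, IsSplitted G A B

/-- Tyshkevich composition `(G, A, B) ∘ H`: the disjoint union of `G` and `H`
together with all edges between the clique `B` and the vertices of `H`. -/
def comp {α β : Type*} (G : SimpleGraph α) (B : Set α) (H : SimpleGraph β) :
    SimpleGraph (α ⊕ β) where
  Adj x y :=
    match x, y with
    | Sum.inl a, Sum.inl a' => G.Adj a a'
    | Sum.inr b, Sum.inr b' => H.Adj b b'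
    | Sum.inl a, Sum.inr _ => a ∈ B
    | Sum.inr _, Sum.inl a => a ∈ B
  symm := by
    refine ⟨?_⟩
    rintro (a | b) (a' | b') h
    · exact G.adj_symm h
    · exact h
    · exact h
    · exact H.adj_symm h
  loopless := by
    refine ⟨?_⟩
    rintro (a | b) h
    · exact G.irrefl h
    · exact H.irrefl h

/-- The degree of a vertex, as the cardinality of its neighborhood. -/
noncomputable def deg {α : Type*} (G : SimpleGraph α) (v : α) : ℕ :=
  (G.neighborSet v).ncard

/-- The disjoint union of two edges. -/
def twoK2 : SimpleGraph (Fin 4) :=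
  SimpleGraph.fromRel fun a b => (a.val = 0 ∧ b.val = 1) ∨ (a.val = 2 ∧ b.val = 3)

/-- The 4-cycle. -/
def cycle4 : SimpleGraph (Fin 4) :=
  SimpleGraph.fromRel fun a b =>
    (a.val = 0 ∧ b.val = 1) ∨ (a.val = 1 ∧ b.val = 2) ∨
    (a.val = 2 ∧ b.val = 3) ∨ (a.val = 3 ∧ b.val = 0)

/-- The path on four vertices. -/
def path4 : SimpleGraph (Fin 4) :=
  SimpleGraph.fromRel fun a b =>
    (a.val = 0 ∧ b.val = 1) ∨ (a.val = 1 ∧ b.val = 2) ∨ (a.val = 2 ∧ b.val = 3)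

/-- The 5-cycle. -/
def cycle5 : SimpleGraph (Fin 5) :=
  SimpleGraph.fromRel fun a b =>
    (a.val = 0 ∧ b.val = 1) ∨ (a.val = 1 ∧ b.val = 2) ∨
    (a.val = 2 ∧ b.val = 3) ∨ (a.val = 3 ∧ b.val = 4) ∨ (a.val = 4 ∧ b.val = 0)

lemma EG {V : Type*} [Fintype V] [DecidableEq V] (G : SimpleGraph V) [DecidableRel G.Adj]
    (S : Finset V) :
    ∑ v ∈ S, G.degree v ≤ S.card * (S.card - 1) + ∑ v ∈ Sᶜ, min S.card (G.degree v) := by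
  have hdeg : ∀ v, G.degree v =
      (S.filter (G.Adj v)).card + (Sᶜ.filter (G.Adj v)).card := by
    intro v
    rw [← SimpleGraph.card_neighborFinset_eq_degree, SimpleGraph.neighborFinset_eq_filter,
      ← Finset.union_compl S, Finset.filter_union, Finset.card_union_of_disjoint]
    exact Finset.disjoint_filter_filter (disjoint_compl_right)
  have h1 : ∑ v ∈ S, (S.filter (G.Adj v)).card ≤ S.card * (S.card - 1) := by
    calc ∑ v ∈ S, (S.filter (G.Adj v)).card ≤ ∑ _v ∈ S, (S.card - 1) := by
          apply Finset.sum_le_sum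
          intro v hv
          have : S.filter (G.Adj v) ⊆ S.erase v := by
            intro x hx
            simp only [Finset.mem_filter] at hx
            exact Finset.mem_erase.2 ⟨fun h => G.irrefl (v := v) (h ▸ hx.2), hx.1⟩
          calc (S.filter (G.Adj v)).card ≤ (S.erase v).card := Finset.card_le_card this
            _ = S.card - 1 := Finset.card_erase_of_mem hv
      _ = S.card * (S.card - 1) := by rw [Finset.sum_const, smul_eq_mul]
  have h2 : ∑ v ∈ S, (Sᶜ.filter (G.Adj v)).card
      = ∑ w ∈ Sᶜ, (S.filter (G.Adj w)).card := by
    simp only [Finset.card_filter]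
    rw [Finset.sum_comm]
    congr 1
    ext w
    congr 1
    ext v
    simp [G.adj_comm]
  have h3 : ∑ w ∈ Sᶜ, (S.filter (G.Adj w)).card ≤ ∑ w ∈ Sᶜ, min S.card (G.degree w) := by
    apply Finset.sum_le_sum
    intro w _
    refine le_min (Finset.card_le_card (Finset.filter_subset _ _)) ?_
    rw [← SimpleGraph.card_neighborFinset_eq_degree]
    apply Finset.card_le_card
    intro x hx
    simp only [Finset.mem_filter] at hx
    exact (SimpleGraph.mem_neighborFinset G w x).2 hx.2
  calc ∑ v ∈ S, G.degree v
      = ∑ v ∈ S, (S.filter (G.Adj v)).card + ∑ v ∈ S, (Sᶜ.filter (G.Adj v)).card := by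
        rw [← Finset.sum_add_distrib]; exact Finset.sum_congr rfl fun v _ => hdeg v
    _ ≤ S.card * (S.card - 1) + ∑ w ∈ Sᶜ, min S.card (G.degree w) := by
        rw [h2]; exact Nat.add_le_add h1 h3

lemma card_filter_val (n : ℕ) (p : ℕ → Prop) [DecidablePred p] :
    (univ.filter fun i : Fin n => p i.val).card = ((Finset.range n).filter p).card := by
  rw [Finset.card_filter, Finset.card_filter]
  exact Fin.sum_univ_eq_sum_range (fun j => if p j then 1 else 0) n

/-- if a graphic sequence `d` (nonincreasing, indexed by `Fin n`,
so that the 1-based term `d_i` is `d ⟨i-1⟩`) satisfies the `k`-th Erdős–Gallai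
inequality with equality, then `k ≤ m(d) = max{i : d_i ≥ i − 1}`. -/
theorem stmt2 (n k : ℕ) (d : Fin n → ℕ) (hanti : Antitone d)
    (hgraphic : ∃ G : SimpleGraph (Fin n), ∀ i, deg G i = d i)
    (hk : k ≤ n)
    (heq : ∑ i ∈ Finset.univ.filter (fun i : Fin n => (i : ℕ) < k), d i =
        k * (k - 1) +
          ∑ i ∈ Finset.univ.filter (fun i : Fin n => ¬ (i : ℕ) < k), min k (d i)) :
    k ≤ (Finset.univ.filter (fun i : Fin n => (i : ℕ) ≤ d i)).sup
        (fun i : Fin n => (i : ℕ) + 1) := by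
  classical
  obtain ⟨G, hG⟩ := hgraphic
  have hdeg : ∀ i, G.degree i = d i := by
    intro i
    rw [← hG i]
    simp [deg, SimpleGraph.degree, SimpleGraph.neighborFinset_def,
      Set.ncard_eq_toFinset_card']
  set M := (Finset.univ.filter (fun i : Fin n => (i : ℕ) ≤ d i)).sup
      (fun i : Fin n => (i : ℕ) + 1) with hMdef
  by_contra hcon
  push_neg at hcon
  have hkpos : 0 < k := lt_of_le_of_lt (Nat.zero_le M) hcon
  have hn : 0 < n := lt_of_lt_of_le hkpos hk
  have hM1 : 1 ≤ M := by
    have h0 : (⟨0, hn⟩ : Fin n) ∈ Finset.univ.filter (fun i : Fin n => (i : ℕ) ≤ d i) := by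
      simp
    exact Finset.le_sup (f := fun i : Fin n => (i : ℕ) + 1) h0
  have hMn : M < n := lt_of_lt_of_le hcon hk
  set iM : Fin n := ⟨M, hMn⟩ with hiM
  have hdM : d iM ≤ M - 1 := by
    have hnot : ¬ ((iM : ℕ) ≤ d iM) := by
      intro h
      have hmem : iM ∈ Finset.univ.filter (fun i : Fin n => (i : ℕ) ≤ d i) := by
        simp only [Finset.mem_filter, Finset.mem_univ, true_and]
        exact h
      have := Finset.le_sup (f := fun i : Fin n => (i : ℕ) + 1) hmem
      simp only [← hMdef, hiM] at this
      omega
    simp only [hiM] at hnot ⊢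
    omega
  have hd : ∀ i : Fin n, M ≤ (i : ℕ) → d i ≤ M - 1 := by
    intro i hi
    exact le_trans (hanti (Fin.le_def.2 hi)) hdM
  -- set abbreviations
  set SA := Finset.univ.filter (fun i : Fin n => (i : ℕ) < M) with hSA
  set SB := Finset.univ.filter (fun i : Fin n => M ≤ (i : ℕ) ∧ (i : ℕ) < k) with hSB
  set SC := Finset.univ.filter (fun i : Fin n => k ≤ (i : ℕ)) with hSC
  -- split LHS of heq
  have hsplit1 : ∑ i ∈ Finset.univ.filter (fun i : Fin n => (i : ℕ) < k), d i
      = ∑ i ∈ SA, d i + ∑ i ∈ SB, d i := by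
    rw [← Finset.sum_filter_add_sum_filter_not
      (Finset.univ.filter (fun i : Fin n => (i : ℕ) < k)) (fun i => (i : ℕ) < M)]
    congr 1
    · apply Finset.sum_congr _ (fun _ _ => rfl)
      ext i; simp only [Finset.mem_filter, Finset.mem_univ, true_and, hSA]; omega
    · apply Finset.sum_congr _ (fun _ _ => rfl)
      ext i; simp only [Finset.mem_filter, Finset.mem_univ, true_and, hSB]; omega
  -- RHS sum of heq
  have hsplit2 : ∑ i ∈ Finset.univ.filter (fun i : Fin n => ¬ (i : ℕ) < k), min k (d i)
      = ∑ i ∈ SC, d i := by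
    have hset : Finset.univ.filter (fun i : Fin n => ¬ (i : ℕ) < k) = SC := by
      ext i; simp only [Finset.mem_filter, Finset.mem_univ, true_and, hSC]; omega
    rw [hset]
    apply Finset.sum_congr rfl
    intro i hi
    have hik : k ≤ (i : ℕ) := (Finset.mem_filter.1 hi).2
    have := hd i (le_trans (le_of_lt hcon) hik)
    omega
  rw [hsplit1, hsplit2] at heq
  -- cardinalities
  have hcardA : SA.card = M := by
    have h1 : SA.card = ((Finset.range n).filter (fun j => j < M)).card :=
      card_filter_val n (fun j => j < M)
    have h2 : (Finset.range n).filter (fun j => j < M) = Finset.range M := by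
      ext j; simp only [Finset.mem_filter, Finset.mem_range]; omega
    rw [h1, h2, Finset.card_range]
  have hcardB : SB.card = k - M := by
    have h1 : SB.card = ((Finset.range n).filter (fun j => M ≤ j ∧ j < k)).card :=
      card_filter_val n (fun j => M ≤ j ∧ j < k)
    have h2 : (Finset.range n).filter (fun j => M ≤ j ∧ j < k) = Finset.Ico M k := by
      ext j; simp only [Finset.mem_filter, Finset.mem_range, Finset.mem_Ico]; omega
    rw [h1, h2, Nat.card_Ico]
  -- Erdős–Gallai at M
  have hEG := EG G SA
  have hcompl : SAᶜ = Finset.univ.filter (fun i : Fin n => ¬ (i : ℕ) < M) := by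
    rw [hSA, Finset.compl_filter]
  have hEG2 : ∑ i ∈ SA, d i ≤ M * (M - 1) + (∑ i ∈ SB, d i + ∑ i ∈ SC, d i) := by
    have hdsum : ∀ s : Finset (Fin n), ∑ v ∈ s, G.degree v = ∑ v ∈ s, d v :=
      fun s => Finset.sum_congr rfl (fun v _ => hdeg v)
    rw [hdsum, hcardA, hcompl] at hEG
    refine le_trans hEG ?_
    apply Nat.add_le_add_left
    have hmin : ∑ i ∈ Finset.univ.filter (fun i : Fin n => ¬ (i : ℕ) < M),
        min M (G.degree i) = ∑ i ∈ Finset.univ.filter (fun i : Fin n => ¬ (i : ℕ) < M), d i := by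
      apply Finset.sum_congr rfl
      intro i hi
      have hiM' : M ≤ (i : ℕ) := by
        have := (Finset.mem_filter.1 hi).2; omega
      rw [hdeg i]
      have := hd i hiM'
      omega
    rw [hmin, ← Finset.sum_filter_add_sum_filter_not
      (Finset.univ.filter (fun i : Fin n => ¬ (i : ℕ) < M)) (fun i => (i : ℕ) < k)]
    apply Nat.add_le_add
    · apply le_of_eq
      apply Finset.sum_congr _ (fun _ _ => rfl)
      ext i; simp only [Finset.mem_filter, Finset.mem_univ, true_and, hSB]; omega
    · apply le_of_eq
      apply Finset.sum_congr _ (fun _ _ => rfl)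
      ext i; simp only [Finset.mem_filter, Finset.mem_univ, true_and, hSC]; omega
  -- bound on SB sum
  have hBbound : ∑ i ∈ SB, d i ≤ (k - M) * (M - 1) := by
    calc ∑ i ∈ SB, d i ≤ ∑ _i ∈ SB, (M - 1) := by
          apply Finset.sum_le_sum
          intro i hi
          exact hd i (Finset.mem_filter.1 hi).2.1
      _ = (k - M) * (M - 1) := by rw [Finset.sum_const, smul_eq_mul, hcardB]
  -- combine
  have hfin : k * (k - 1) ≤ M * (M - 1) + 2 * ((k - M) * (M - 1)) := by
    linarith [heq, hEG2, hBbound]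
  obtain ⟨a, ha⟩ : ∃ a, M = a + 1 := ⟨M - 1, by omega⟩
  obtain ⟨b, hb⟩ : ∃ b, k = a + b + 2 := ⟨k - M - 1, by omega⟩
  rw [ha, hb] at hfin
  have e1 : a + b + 2 - 1 = a + b + 1 := by omega
  have e2 : a + 1 - 1 = a := by omega
  have e3 : a + b + 2 - (a + 1) = b + 1 := by omega
  rw [e1, e2, e3] at hfin
  nlinarith [hfin]
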